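/- Let 1 < p ≤ q and let A be an n×n matrix with all entries in [1/N, 1]. For every τ > 0, the upper level set N_τ = {x ∈ S_q^n : f(x) ≥ τ} is path-connected. -/

import Mathlib

/-- The `ℓ_p` norm of a vector in `ℝ^n` for a real exponent `p`. -/
noncomputable def pnorm {n : ℕ} (p : ℝ) (x : Fin n → ℝ) : ℝ :=
  (∑ i, |x i| ^ p) ^ (1 / p)

private lemma rpow_q_inv {q : ℝ} (hq : 0 < q) {a : ℝ} (ha : 0 ≤ a) :
    (a ^ q) ^ (1 / q) = a := by
  rw [one_div, Real.rpow_rpow_inv ha hq.ne']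

private lemma rpow_inv_q {q : ℝ} (hq : 0 < q) {a : ℝ} (ha : 0 ≤ a) :
    (a ^ (1 / q)) ^ q = a := by
  rw [one_div, Real.rpow_inv_rpow ha hq.ne']

private lemma sum_q_eq_one {n : ℕ} {q : ℝ} (hq : 0 < q) {x : Fin n → ℝ}
    (hx : ∀ i, 0 ≤ x i) (h : pnorm q x = 1) : ∑ i, x i ^ q = 1 := by
  have h0 : 0 ≤ ∑ i, x i ^ q := Finset.sum_nonneg fun i _ => Real.rpow_nonneg (hx i) q
  have habs : (∑ i, |x i| ^ q) = ∑ i, x i ^ q :=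
    Finset.sum_congr rfl fun i _ => by rw [abs_of_nonneg (hx i)]
  rw [pnorm, habs] at h
  calc ∑ i, x i ^ q = ((∑ i, x i ^ q) ^ (1 / q)) ^ q := (rpow_inv_q hq h0).symm
    _ = (1 : ℝ) ^ q := by rw [h]
    _ = 1 := Real.one_rpow q

/-- Minkowski inequality in `ℝ²` applied to a finite family: the `ℓ_q` norm of a sum is at most
the sum of the `ℓ_q` norms. -/
private lemma minkowski_sum {n : ℕ} {q : ℝ} (hq : 1 ≤ q) (u v : Fin n → ℝ)
    (hu : ∀ j, 0 ≤ u j) (hv : ∀ j, 0 ≤ v j) :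
    ((∑ j, u j) ^ q + (∑ j, v j) ^ q) ^ (1 / q) ≤ ∑ j, (u j ^ q + v j ^ q) ^ (1 / q) := by
  have hq0 : 0 < q := lt_of_lt_of_le one_pos hq
  haveI : Fact (1 ≤ ENNReal.ofReal q) := ⟨ENNReal.one_le_ofReal.mpr hq⟩
  have ht : (ENNReal.ofReal q).toReal = q := ENNReal.toReal_ofReal hq0.le
  let w : Fin n → PiLp (ENNReal.ofReal q) (fun _ : Fin 2 => ℝ) :=
    fun j => (WithLp.equiv _ _).symm ![u j, v j]
  have hnorm : ∀ f : PiLp (ENNReal.ofReal q) (fun _ : Fin 2 => ℝ),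
      ‖f‖ = (|f 0| ^ q + |f 1| ^ q) ^ (1 / q) := by
    intro f
    rw [PiLp.norm_eq_sum (by rw [ht]; exact hq0), ht, Fin.sum_univ_two]
    norm_num
  have hsum_apply : ∀ i : Fin 2, (∑ j, w j) i = ∑ j, w j i := by
    intro i
    rw [WithLp.ofLp_sum]
    exact Finset.sum_apply i Finset.univ (fun j => (w j).ofLp)
  have key := norm_sum_le Finset.univ w
  have hL : ‖∑ j, w j‖ = ((∑ j, u j) ^ q + (∑ j, v j) ^ q) ^ (1 / q) := by
    rw [hnorm, hsum_apply, hsum_apply]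
    have h0 : ∀ j, w j (0 : Fin 2) = u j := fun j => rfl
    have h1 : ∀ j, w j (1 : Fin 2) = v j := fun j => rfl
    simp only [h0, h1]
    rw [abs_of_nonneg (Finset.sum_nonneg fun j _ => hu j),
      abs_of_nonneg (Finset.sum_nonneg fun j _ => hv j)]
  have hR : ∀ j, ‖w j‖ = (u j ^ q + v j ^ q) ^ (1 / q) := by
    intro j
    rw [hnorm]
    have h0 : w j (0 : Fin 2) = u j := rfl
    have h1 : w j (1 : Fin 2) = v j := rfl
    rw [h0, h1, abs_of_nonneg (hu j), abs_of_nonneg (hv j)]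
  rw [hL] at key
  calc ((∑ j, u j) ^ q + (∑ j, v j) ^ q) ^ (1 / q) ≤ ∑ j, ‖w j‖ := key
    _ = ∑ j, (u j ^ q + v j ^ q) ^ (1 / q) := Finset.sum_congr rfl fun j _ => hR j

/-- for every `τ > 0`, the upper level set
`N_τ = {x ∈ S_q^n : f(x) ≥ τ}` is connected (any two of its points are joined
by a path inside it). -/
theorem stmt10 (n : ℕ) (hn : 1 ≤ n) (p q N : ℝ) (hp : 1 < p) (hpq : p ≤ q) (hN : 1 ≤ N)
    (A : Matrix (Fin n) (Fin n) ℝ) (hA : ∀ i j, A i j ∈ Set.Icc (1 / N) 1)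
    (τ : ℝ) (hτ : 0 < τ) :
    ∀ x ∈ {x : Fin n → ℝ | (∀ i, 0 ≤ x i) ∧ pnorm q x = 1 ∧
        τ ≤ pnorm p (A.mulVec x) / pnorm q x},
      ∀ y ∈ {x : Fin n → ℝ | (∀ i, 0 ≤ x i) ∧ pnorm q x = 1 ∧
        τ ≤ pnorm p (A.mulVec x) / pnorm q x},
      JoinedIn {x : Fin n → ℝ | (∀ i, 0 ≤ x i) ∧ pnorm q x = 1 ∧
        τ ≤ pnorm p (A.mulVec x) / pnorm q x} x y := by
  have hp0 : 0 < p := lt_trans one_pos hp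
  have hq1 : 1 < q := lt_of_lt_of_le hp hpq
  have hq0 : 0 < q := lt_trans one_pos hq1
  have hA0 : ∀ i j, 0 ≤ A i j := fun i j =>
    le_trans (by positivity) (hA i j).1
  intro x hx y hy
  obtain ⟨hx0, hxq, hxτ⟩ := hx
  obtain ⟨hy0, hyq, hyτ⟩ := hy
  -- the path in the positive orthant of the q-sphere
  set g : ℝ → (Fin n → ℝ) :=
    fun s i => ((1 - s) * x i ^ q + s * y i ^ q) ^ (1 / q) with hg
  have hmv : ∀ z : Fin n → ℝ, ∀ i, A.mulVec z i = ∑ j, A i j * z j := by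
    intro z i; simp [Matrix.mulVec, dotProduct]
  -- τ^p bounds from hypotheses
  have hτpow : ∀ z : Fin n → ℝ, (∀ i, 0 ≤ z i) → pnorm q z = 1 →
      τ ≤ pnorm p (A.mulVec z) / pnorm q z → τ ^ p ≤ ∑ i, (∑ j, A i j * z j) ^ p := by
    intro z hz0 hzq hzτ
    rw [hzq, div_one] at hzτ
    have hmvz : ∀ i, 0 ≤ A.mulVec z i := by
      intro i; rw [hmv]
      exact Finset.sum_nonneg fun j _ => mul_nonneg (hA0 i j) (hz0 j)
    have h2 : τ ^ p ≤ pnorm p (A.mulVec z) ^ p := Real.rpow_le_rpow hτ.le hzτ hp0.le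
    have h3 : pnorm p (A.mulVec z) ^ p = ∑ i, (∑ j, A i j * z j) ^ p := by
      rw [pnorm, rpow_inv_q hp0 (Finset.sum_nonneg fun i _ => Real.rpow_nonneg (abs_nonneg _) p)]
      exact Finset.sum_congr rfl fun i _ => by rw [abs_of_nonneg (hmvz i), hmv]
    rw [h3] at h2; exact h2
  have hτx : τ ^ p ≤ ∑ i, (∑ j, A i j * x j) ^ p := hτpow x hx0 hxq hxτ
  have hτy : τ ^ p ≤ ∑ i, (∑ j, A i j * y j) ^ p := hτpow y hy0 hyq hyτ
  -- membership along the path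
  have hmem : ∀ s : ℝ, 0 ≤ s → s ≤ 1 → g s ∈ {x : Fin n → ℝ | (∀ i, 0 ≤ x i) ∧ pnorm q x = 1 ∧
      τ ≤ pnorm p (A.mulVec x) / pnorm q x} := by
    intro s hs0 hs1
    have hl0 : (0:ℝ) ≤ 1 - s := by linarith
    have hbase : ∀ i, 0 ≤ (1 - s) * x i ^ q + s * y i ^ q := by
      intro i
      have := Real.rpow_nonneg (hx0 i) q
      have := Real.rpow_nonneg (hy0 i) q
      positivity
    have hg0 : ∀ i, 0 ≤ g s i := fun i => Real.rpow_nonneg (hbase i) _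
    have hgq : pnorm q (g s) = 1 := by
      have habs : ∀ i, |g s i| ^ q = (1 - s) * x i ^ q + s * y i ^ q := by
        intro i
        rw [abs_of_nonneg (hg0 i), hg, rpow_inv_q hq0 (hbase i)]
      rw [pnorm]
      have : ∑ i, |g s i| ^ q = 1 := by
        simp only [habs]
        rw [Finset.sum_add_distrib, ← Finset.mul_sum, ← Finset.mul_sum,
          sum_q_eq_one hq0 hx0 hxq, sum_q_eq_one hq0 hy0 hyq]
        ring
      rw [this, Real.one_rpow]
    refine ⟨hg0, hgq, ?_⟩
    rw [hgq, div_one]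
    -- per-row key inequality
    have key : ∀ i : Fin n,
        (1 - s) * (∑ j, A i j * x j) ^ p + s * (∑ j, A i j * y j) ^ p
          ≤ (∑ j, A i j * g s j) ^ p := by
      intro i
      set S := ∑ j, A i j * x j with hS
      set T := ∑ j, A i j * y j with hT
      have hS0 : 0 ≤ S := Finset.sum_nonneg fun j _ => mul_nonneg (hA0 i j) (hx0 j)
      have hT0 : 0 ≤ T := Finset.sum_nonneg fun j _ => mul_nonneg (hA0 i j) (hy0 j)
      have hG0 : 0 ≤ ∑ j, A i j * g s j :=
        Finset.sum_nonneg fun j _ => mul_nonneg (hA0 i j) (hg0 j)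
      -- Step 1: Minkowski
      have hmink : ((1 - s) * S ^ q + s * T ^ q) ^ (1 / q) ≤ ∑ j, A i j * g s j := by
        have h := minkowski_sum hq1.le
          (fun j => (1 - s) ^ (1 / q) * (A i j * x j))
          (fun j => s ^ (1 / q) * (A i j * y j))
          (fun j => mul_nonneg (Real.rpow_nonneg hl0 _) (mul_nonneg (hA0 i j) (hx0 j)))
          (fun j => mul_nonneg (Real.rpow_nonneg hs0 _) (mul_nonneg (hA0 i j) (hy0 j)))
        have hL : ((∑ j, (1 - s) ^ (1 / q) * (A i j * x j)) ^ q
            + (∑ j, s ^ (1 / q) * (A i j * y j)) ^ q)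
            = (1 - s) * S ^ q + s * T ^ q := by
          rw [← Finset.mul_sum, ← Finset.mul_sum, ← hS, ← hT,
            Real.mul_rpow (Real.rpow_nonneg hl0 _) hS0,
            Real.mul_rpow (Real.rpow_nonneg hs0 _) hT0,
            rpow_inv_q hq0 hl0, rpow_inv_q hq0 hs0]
        have hR : ∀ j, (((1 - s) ^ (1 / q) * (A i j * x j)) ^ q
            + (s ^ (1 / q) * (A i j * y j)) ^ q) ^ (1 / q) = A i j * g s j := by
          intro j
          have e1 : ((1 - s) ^ (1 / q) * (A i j * x j)) ^ q = (1 - s) * (A i j * x j) ^ q := by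
            rw [Real.mul_rpow (Real.rpow_nonneg hl0 _) (mul_nonneg (hA0 i j) (hx0 j)),
              rpow_inv_q hq0 hl0]
          have e2 : (s ^ (1 / q) * (A i j * y j)) ^ q = s * (A i j * y j) ^ q := by
            rw [Real.mul_rpow (Real.rpow_nonneg hs0 _) (mul_nonneg (hA0 i j) (hy0 j)),
              rpow_inv_q hq0 hs0]
          rw [e1, e2]
          have e3 : (1 - s) * (A i j * x j) ^ q + s * (A i j * y j) ^ q
              = (A i j) ^ q * ((1 - s) * x j ^ q + s * y j ^ q) := by
            rw [Real.mul_rpow (hA0 i j) (hx0 j), Real.mul_rpow (hA0 i j) (hy0 j)]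
            ring
          rw [e3, Real.mul_rpow (Real.rpow_nonneg (hA0 i j) q) (hbase j),
            rpow_q_inv hq0 (hA0 i j)]
        calc ((1 - s) * S ^ q + s * T ^ q) ^ (1 / q)
            = ((∑ j, (1 - s) ^ (1 / q) * (A i j * x j)) ^ q
              + (∑ j, s ^ (1 / q) * (A i j * y j)) ^ q) ^ (1 / q) := by rw [hL]
          _ ≤ ∑ j, (((1 - s) ^ (1 / q) * (A i j * x j)) ^ q
              + (s ^ (1 / q) * (A i j * y j)) ^ q) ^ (1 / q) := h
          _ = ∑ j, A i j * g s j := Finset.sum_congr rfl fun j _ => hR j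
      -- Step 2: power-mean inequality with exponent r = q/p ≥ 1
      set r := q / p with hr
      have hr1 : 1 ≤ r := (one_le_div hp0).mpr hpq
      have hpm := Real.arith_mean_le_rpow_mean Finset.univ ![1 - s, s] ![S ^ p, T ^ p]
        (by intro i _; fin_cases i <;> simpa) (by simp)
        (by intro i _; fin_cases i <;>
            simp [Real.rpow_nonneg hS0, Real.rpow_nonneg hT0]) hr1
      simp only [Fin.sum_univ_two, Matrix.cons_val_zero, Matrix.cons_val_one,
        Matrix.head_cons] at hpm
      have e4 : (S ^ p) ^ r = S ^ q := by
        rw [← Real.rpow_mul hS0]; congr 1; rw [hr]; field_simp [hp0.ne']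
      have e5 : (T ^ p) ^ r = T ^ q := by
        rw [← Real.rpow_mul hT0]; congr 1; rw [hr]; field_simp [hp0.ne']
      rw [e4, e5] at hpm
      have hc0 : 0 ≤ (1 - s) * S ^ q + s * T ^ q := by
        have := Real.rpow_nonneg hS0 q
        have := Real.rpow_nonneg hT0 q
        positivity
      have e6 : ((1 - s) * S ^ q + s * T ^ q) ^ (1 / r)
          = (((1 - s) * S ^ q + s * T ^ q) ^ (1 / q)) ^ p := by
        rw [← Real.rpow_mul hc0]
        congr 1
        rw [hr, one_div_div]; ring
      rw [e6] at hpm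
      calc (1 - s) * S ^ p + s * T ^ p
          ≤ (((1 - s) * S ^ q + s * T ^ q) ^ (1 / q)) ^ p := hpm
        _ ≤ (∑ j, A i j * g s j) ^ p :=
            Real.rpow_le_rpow (Real.rpow_nonneg hc0 _) hmink hp0.le
    -- sum over rows
    have htotal : τ ^ p ≤ ∑ i, (∑ j, A i j * g s j) ^ p := by
      calc τ ^ p = (1 - s) * τ ^ p + s * τ ^ p := by ring
        _ ≤ (1 - s) * (∑ i, (∑ j, A i j * x j) ^ p) + s * (∑ i, (∑ j, A i j * y j) ^ p) := by
            gcongr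
        _ = ∑ i, ((1 - s) * (∑ j, A i j * x j) ^ p + s * (∑ j, A i j * y j) ^ p) := by
            rw [Finset.sum_add_distrib, Finset.mul_sum, Finset.mul_sum]
        _ ≤ ∑ i, (∑ j, A i j * g s j) ^ p := Finset.sum_le_sum fun i _ => key i
    have habs : ∑ i, |A.mulVec (g s) i| ^ p = ∑ i, (∑ j, A i j * g s j) ^ p := by
      refine Finset.sum_congr rfl fun i _ => ?_
      rw [hmv, abs_of_nonneg (Finset.sum_nonneg fun j _ => mul_nonneg (hA0 i j) (hg0 j))]
    calc τ = (τ ^ p) ^ (1 / p) := (rpow_q_inv hp0 hτ.le).symm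
      _ ≤ (∑ i, |A.mulVec (g s) i| ^ p) ^ (1 / p) := by
          apply Real.rpow_le_rpow (Real.rpow_nonneg hτ.le p) _ (by positivity)
          rw [habs]; exact htotal
      _ = pnorm p (A.mulVec (g s)) := rfl
  -- build the path
  have hcont : Continuous fun t : unitInterval => g t := by
    apply continuous_pi
    intro i
    apply (Real.continuous_rpow_const (by positivity)).comp
    exact ((continuous_const.sub continuous_subtype_val).mul continuous_const).add
      (continuous_subtype_val.mul continuous_const)
  have hsrc : g ((0 : unitInterval) : ℝ) = x := by
    funext i
    show ((1 - ((0 : unitInterval) : ℝ)) * x i ^ q + ((0 : unitInterval) : ℝ) * y i ^ q) ^ (1 / q) = x i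
    norm_num
    exact Real.rpow_rpow_inv (hx0 i) hq0.ne'
  have htgt : g ((1 : unitInterval) : ℝ) = y := by
    funext i
    show ((1 - ((1 : unitInterval) : ℝ)) * x i ^ q + ((1 : unitInterval) : ℝ) * y i ^ q) ^ (1 / q) = y i
    norm_num
    exact Real.rpow_rpow_inv (hy0 i) hq0.ne'
  exact ⟨⟨⟨fun t => g t, hcont⟩, hsrc, htgt⟩, fun t => hmem t t.2.1 t.2.2⟩
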